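/- Let α ∈ (0,1), let p_X be a strictly positive probability distribution on 𝒳 and p_{Y|X} a channel with p_{Y|X}(y|x) > 0 for all x, y. (1) For any strictly positive probability distribution q̃_{X,Y} on 𝒳×𝒴, the map q_Y ↦ F_α^{LP}(q̃_{X,Y}, q_Y) over probability distributions q_Y on 𝒴 is minimized by the Y-marginal q*_Y(y) := Σ_x q̃_{X,Y}(x,y). (2) For any strictly positive probability distribution q_Y on 𝒴, the map q̃_{X,Y} ↦ F_α^{LP}(q̃_{X,Y}, q_Y) over strictly positive probability distributions q̃_{X,Y} on 𝒳×𝒴 is minimized by q̃*_{X,Y}(x,y) := q̄_X(x) q̄_{Y|X}(y|x), where q̄_{Y|X}(y|x) := p_{Y|X}(y|x)^α q_Y(y)^{1−α} / Σ_{y'} p_{Y|X}(y'|x)^α q_Y(y')^{1−α} and q̄_X(x) := p_X(x) ( Σ_y p_{Y|X}(y|x)^α q_Y(y)^{1−α} )^{1/α} / Σ_{x'} p_X(x') ( Σ_y p_{Y|X}(y|x')^α q_Y(y)^{1−α} )^{1/α}. -/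

import Mathlib

/-- A probability mass function on a finite type. -/
def IsPMF {Z : Type*} [Fintype Z] (q : Z → ℝ) : Prop :=
  (∀ z, 0 ≤ q z) ∧ ∑ z, q z = 1

/-- Kullback--Leibler divergence (natural log), real-valued. -/
noncomputable def klD {Z : Type*} [Fintype Z] (p q : Z → ℝ) : ℝ :=
  ∑ z, p z * Real.log (p z / q z)

/-- Kullback--Leibler divergence valued in `ℝ ∪ {+∞}` (as `EReal`): it is `⊤` when `q`
vanishes somewhere on the support of `p`. -/
noncomputable def klDE {Z : Type*} [Fintype Z] (p q : Z → ℝ) : EReal :=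
  if ∃ z, p z ≠ 0 ∧ q z = 0 then ⊤
  else ((∑ z, p z * Real.log (p z / q z) : ℝ) : EReal)

/-- `F_α^{LP}(q̃_{X,Y}, q_Y) = (α/(1−α)) D(q̃_{X,Y} ‖ q̃_X p_{Y|X})
  + D(q̃_{X,Y} ‖ q̃_X q_Y) + (α/(1−α)) D(q̃_X ‖ p_X)`, valued in `EReal`. -/
noncomputable def FLP {X Y : Type*} [Fintype X] [Fintype Y]
    (α : ℝ) (pX : X → ℝ) (pYX : X → Y → ℝ) (qt : X × Y → ℝ) (qY : Y → ℝ) : EReal :=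
  (((α / (1 - α)) * klD qt (fun z : X × Y => (∑ y, qt (z.1, y)) * pYX z.1 z.2) : ℝ) : EReal)
  + klDE qt (fun z : X × Y => (∑ y, qt (z.1, y)) * qY z.2)
  + (((α / (1 - α)) * klD (fun x => ∑ y, qt (x, y)) pX : ℝ) : EReal)

/- ===== auxiliary lemmas ===== -/

lemma gibbs {Z : Type*} [Fintype Z] (p q : Z → ℝ) (hp : ∀ z, 0 < p z) (hq : ∀ z, 0 < q z)
    (hs : ∑ z, q z ≤ ∑ z, p z) : 0 ≤ ∑ z, p z * Real.log (p z / q z) := by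
  have h : ∀ z : Z, p z - q z ≤ p z * Real.log (p z / q z) := by
    intro z
    have h1 : Real.log (q z / p z) ≤ q z / p z - 1 :=
      Real.log_le_sub_one_of_pos (div_pos (hq z) (hp z))
    have h2 : Real.log (p z / q z) = - Real.log (q z / p z) := by
      rw [← Real.log_inv, inv_div]
    have h3 : p z * Real.log (q z / p z) ≤ p z * (q z / p z - 1) :=
      mul_le_mul_of_nonneg_left h1 (hp z).le
    have h4 : p z * (q z / p z - 1) = q z - p z := by
      rw [mul_sub, mul_one, mul_div_cancel₀ _ (hp z).ne']
    have h5 : p z * Real.log (p z / q z) = -(p z * Real.log (q z / p z)) := by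
      rw [h2]; ring
    linarith
  have := Finset.sum_le_sum (fun z (_ : z ∈ Finset.univ) => h z)
  rw [Finset.sum_sub_distrib] at this
  linarith

section Aux

variable {X Y : Type*} [Fintype X] [Fintype Y]
variable (α : ℝ) (pX : X → ℝ) (pYX : X → Y → ℝ) (qY : Y → ℝ)

noncomputable def tG (x : X) (y : Y) : ℝ := pYX x y ^ α * qY y ^ (1 - α)

noncomputable def tS (x : X) : ℝ := ∑ y, tG α pYX qY x y

noncomputable def tC : ℝ := ∑ x, pX x * tS α pYX qY x ^ (1 / α)

noncomputable def tB (x : X) : ℝ := pX x * tS α pYX qY x ^ (1 / α) / tC α pX pYX qY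

noncomputable def tQ (z : X × Y) : ℝ :=
  tB α pX pYX qY z.1 * (tG α pYX qY z.1 z.2 / tS α pYX qY z.1)

noncomputable def Freal (qt : X × Y → ℝ) : ℝ :=
  α / (1 - α) * klD qt (fun z : X × Y => (∑ y, qt (z.1, y)) * pYX z.1 z.2)
  + klD qt (fun z : X × Y => (∑ y, qt (z.1, y)) * qY z.2)
  + α / (1 - α) * klD (fun x => ∑ y, qt (x, y)) pX

variable {α pX pYX qY}

lemma tG_pos (hpYXpos : ∀ x y, 0 < pYX x y) (hqYpos : ∀ y, 0 < qY y) (x : X) (y : Y) : 0 < tG α pYX qY x y :=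
  mul_pos (Real.rpow_pos_of_pos (hpYXpos x y) _) (Real.rpow_pos_of_pos (hqYpos y) _)

lemma tS_pos (hpYXpos : ∀ x y, 0 < pYX x y) (hqYpos : ∀ y, 0 < qY y) [Nonempty Y] (x : X) : 0 < tS α pYX qY x :=
  Finset.sum_pos (fun y _ => tG_pos hpYXpos hqYpos x y) Finset.univ_nonempty

lemma tC_pos (hpYXpos : ∀ x y, 0 < pYX x y) (hqYpos : ∀ y, 0 < qY y) (hpXpos : ∀ x, 0 < pX x) [Nonempty X] [Nonempty Y] : 0 < tC α pX pYX qY :=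
  Finset.sum_pos (fun x _ => mul_pos (hpXpos x)
    (Real.rpow_pos_of_pos (tS_pos hpYXpos hqYpos x) _)) Finset.univ_nonempty

lemma tB_pos (hpYXpos : ∀ x y, 0 < pYX x y) (hqYpos : ∀ y, 0 < qY y) (hpXpos : ∀ x, 0 < pX x) [Nonempty X] [Nonempty Y] (x : X) : 0 < tB α pX pYX qY x :=
  div_pos (mul_pos (hpXpos x) (Real.rpow_pos_of_pos (tS_pos hpYXpos hqYpos x) _))
    (tC_pos hpYXpos hqYpos hpXpos)

lemma tQ_pos (hpYXpos : ∀ x y, 0 < pYX x y) (hqYpos : ∀ y, 0 < qY y) (hpXpos : ∀ x, 0 < pX x) [Nonempty X] [Nonempty Y] (z : X × Y) : 0 < tQ α pX pYX qY z :=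
  mul_pos (tB_pos hpYXpos hqYpos hpXpos z.1)
    (div_pos (tG_pos hpYXpos hqYpos z.1 z.2) (tS_pos hpYXpos hqYpos z.1))

lemma tB_sum (hpYXpos : ∀ x y, 0 < pYX x y) (hqYpos : ∀ y, 0 < qY y) (hpXpos : ∀ x, 0 < pX x) [Nonempty X] [Nonempty Y] : ∑ x, tB α pX pYX qY x = 1 := by
  simp only [tB]
  rw [← Finset.sum_div]
  exact div_self (tC_pos hpYXpos hqYpos hpXpos).ne'

lemma tQ_marg (hpYXpos : ∀ x y, 0 < pYX x y) (hqYpos : ∀ y, 0 < qY y) [Nonempty Y] (x : X) :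
    ∑ y, tQ α pX pYX qY (x, y) = tB α pX pYX qY x := by
  simp only [tQ]
  rw [← Finset.mul_sum, ← Finset.sum_div]
  rw [show (∑ y, tG α pYX qY x y) = tS α pYX qY x from rfl]
  rw [div_self (tS_pos hpYXpos hqYpos x).ne', mul_one]

lemma tQ_sum (hpYXpos : ∀ x y, 0 < pYX x y) (hqYpos : ∀ y, 0 < qY y) (hpXpos : ∀ x, 0 < pX x) [Nonempty X] [Nonempty Y] : ∑ z : X × Y, tQ α pX pYX qY z = 1 := by
  rw [Fintype.sum_prod_type]
  rw [Finset.sum_congr rfl (fun x _ => tQ_marg hpYXpos hqYpos x)]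
  exact tB_sum hpYXpos hqYpos hpXpos

lemma FLP_eq (hqYpos : ∀ y, 0 < qY y) [Nonempty Y] (qt : X × Y → ℝ) (hqtpos : ∀ z, 0 < qt z) :
    FLP α pX pYX qt qY = ((Freal α pX pYX qY qt : ℝ) : EReal) := by
  have hm : ∀ x, 0 < ∑ y, qt (x, y) :=
    fun x => Finset.sum_pos (fun y _ => hqtpos (x, y)) Finset.univ_nonempty
  have hcond : ¬∃ z : X × Y, qt z ≠ 0 ∧ (∑ y, qt (z.1, y)) * qY z.2 = 0 := by
    push_neg
    intro z _
    exact (mul_pos (hm z.1) (hqYpos z.2)).ne'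
  simp only [FLP, klDE, if_neg hcond, Freal, klD]
  norm_cast

end Aux

section Key
variable {X Y : Type*} [Fintype X] [Fintype Y]
variable {α : ℝ} {pX : X → ℝ} {pYX : X → Y → ℝ} {qY : Y → ℝ}

set_option maxHeartbeats 1000000 in
lemma keyId (hα0 : 0 < α) (hα1 : α < 1)
    (hpXpos : ∀ x, 0 < pX x) (hpYXpos : ∀ x y, 0 < pYX x y) (hqYpos : ∀ y, 0 < qY y)
    [Nonempty X] [Nonempty Y]
    (r : X × Y → ℝ) (hr : ∀ z, 0 < r z) (hr1 : ∑ z : X × Y, r z = 1) :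
    (1 - α) * Freal α pX pYX qY r
      = (∑ z : X × Y, r z * Real.log (r z /
            ((∑ y, r (z.1, y)) * (tG α pYX qY z.1 z.2 / tS α pYX qY z.1))))
        + α * (∑ x, (∑ y, r (x, y)) * Real.log ((∑ y, r (x, y)) / tB α pX pYX qY x))
        - α * Real.log (tC α pX pYX qY) := by
  have h1α : (0:ℝ) < 1 - α := by linarith
  have hm : ∀ x, 0 < ∑ y, r (x, y) :=
    fun x => Finset.sum_pos (fun y _ => hr (x, y)) Finset.univ_nonempty
  have hS := fun x => tS_pos (α := α) hpYXpos hqYpos x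
  have hG := fun x y => tG_pos (α := α) hpYXpos hqYpos x y
  have hC := tC_pos (α := α) (pX := pX) hpYXpos hqYpos hpXpos
  set S0 := ∑ z : X × Y, r z * Real.log (r z) with hS0
  set S1 := ∑ z : X × Y, r z * Real.log (∑ y, r (z.1, y)) with hS1
  set S2 := ∑ z : X × Y, r z * Real.log (pYX z.1 z.2) with hS2
  set S3 := ∑ z : X × Y, r z * Real.log (qY z.2) with hS3
  set S4 := ∑ z : X × Y, r z * Real.log (pX z.1) with hS4
  set S5 := ∑ z : X × Y, r z * Real.log (tS α pYX qY z.1) with hS5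
  have hm1 : ∑ x, ∑ y, r (x, y) = 1 := by rw [← Fintype.sum_prod_type, hr1]
  have hP1 : ∑ x, (∑ y, r (x, y)) * Real.log (∑ y, r (x, y)) = S1 := by
    rw [hS1, Fintype.sum_prod_type]
    exact Finset.sum_congr rfl fun x _ => by rw [Finset.sum_mul]
  have hP4 : ∑ x, (∑ y, r (x, y)) * Real.log (pX x) = S4 := by
    rw [hS4, Fintype.sum_prod_type]
    exact Finset.sum_congr rfl fun x _ => by rw [Finset.sum_mul]
  have hP5 : ∑ x, (∑ y, r (x, y)) * Real.log (tS α pYX qY x) = S5 := by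
    rw [hS5, Fintype.sum_prod_type]
    exact Finset.sum_congr rfl fun x _ => by rw [Finset.sum_mul]
  have hA : ∑ z : X × Y, r z * Real.log (r z / ((∑ y, r (z.1, y)) * pYX z.1 z.2))
      = S0 - S1 - S2 := by
    rw [hS0, hS1, hS2, ← Finset.sum_sub_distrib, ← Finset.sum_sub_distrib]
    refine Finset.sum_congr rfl fun z _ => ?_
    rw [Real.log_div (hr z).ne' (mul_pos (hm z.1) (hpYXpos z.1 z.2)).ne',
      Real.log_mul (hm z.1).ne' (hpYXpos z.1 z.2).ne']
    ring
  have hB : ∑ z : X × Y, r z * Real.log (r z / ((∑ y, r (z.1, y)) * qY z.2))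
      = S0 - S1 - S3 := by
    rw [hS0, hS1, hS3, ← Finset.sum_sub_distrib, ← Finset.sum_sub_distrib]
    refine Finset.sum_congr rfl fun z _ => ?_
    rw [Real.log_div (hr z).ne' (mul_pos (hm z.1) (hqYpos z.2)).ne',
      Real.log_mul (hm z.1).ne' (hqYpos z.2).ne']
    ring
  have hCsum : ∑ x, (∑ y, r (x, y)) * Real.log ((∑ y, r (x, y)) / pX x)
      = S1 - S4 := by
    rw [show ∑ x, (∑ y, r (x, y)) * Real.log ((∑ y, r (x, y)) / pX x)
        = ∑ x, ((∑ y, r (x, y)) * Real.log (∑ y, r (x, y))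
            - (∑ y, r (x, y)) * Real.log (pX x)) from
      Finset.sum_congr rfl fun x _ => by
        rw [Real.log_div (hm x).ne' (hpXpos x).ne']; ring]
    rw [Finset.sum_sub_distrib, hP1, hP4]
  have hlogG : ∀ (x : X) (y : Y), Real.log (tG α pYX qY x y)
      = α * Real.log (pYX x y) + (1 - α) * Real.log (qY y) := by
    intro x y
    rw [tG, Real.log_mul (Real.rpow_pos_of_pos (hpYXpos x y) _).ne'
      (Real.rpow_pos_of_pos (hqYpos y) _).ne',
      Real.log_rpow (hpYXpos x y), Real.log_rpow (hqYpos y)]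
  have hD : ∑ z : X × Y, r z * Real.log (r z /
        ((∑ y, r (z.1, y)) * (tG α pYX qY z.1 z.2 / tS α pYX qY z.1)))
      = S0 - S1 - α * S2 - (1 - α) * S3 + S5 := by
    rw [hS0, hS1, hS2, hS3, hS5, Finset.mul_sum, Finset.mul_sum,
      ← Finset.sum_sub_distrib, ← Finset.sum_sub_distrib, ← Finset.sum_sub_distrib,
      ← Finset.sum_add_distrib]
    refine Finset.sum_congr rfl fun z _ => ?_
    rw [Real.log_div (hr z).ne'
        (mul_pos (hm z.1) (div_pos (hG z.1 z.2) (hS z.1))).ne',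
      Real.log_mul (hm z.1).ne' (div_pos (hG z.1 z.2) (hS z.1)).ne',
      Real.log_div (hG z.1 z.2).ne' (hS z.1).ne', hlogG]
    ring
  have hE : ∑ x, (∑ y, r (x, y)) * Real.log ((∑ y, r (x, y)) / tB α pX pYX qY x)
      = S1 - S4 - (1 / α) * S5 + Real.log (tC α pX pYX qY) := by
    rw [show ∑ x, (∑ y, r (x, y)) * Real.log ((∑ y, r (x, y)) / tB α pX pYX qY x)
        = ∑ x, ((∑ y, r (x, y)) * Real.log (∑ y, r (x, y))
            - (∑ y, r (x, y)) * Real.log (pX x)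
            - 1 / α * ((∑ y, r (x, y)) * Real.log (tS α pYX qY x))
            + (∑ y, r (x, y)) * Real.log (tC α pX pYX qY)) from
      Finset.sum_congr rfl fun x _ => by
        rw [tB, Real.log_div (hm x).ne'
            (div_pos (mul_pos (hpXpos x) (Real.rpow_pos_of_pos (hS x) _)) hC).ne',
          Real.log_div (mul_pos (hpXpos x) (Real.rpow_pos_of_pos (hS x) _)).ne' hC.ne',
          Real.log_mul (hpXpos x).ne' (Real.rpow_pos_of_pos (hS x) _).ne',
          Real.log_rpow (hS x)]
        ring]
    rw [Finset.sum_add_distrib, Finset.sum_sub_distrib, Finset.sum_sub_distrib,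
      hP1, hP4, ← Finset.mul_sum, hP5, ← Finset.sum_mul, hm1, one_mul]
  simp only [Freal, klD]
  rw [hA, hB, hCsum, hD, hE]
  field_simp
  ring

end Key

section Main
variable {X Y : Type*} [Fintype X] [Fintype Y]
variable {α : ℝ} {pX : X → ℝ} {pYX : X → Y → ℝ} {qY : Y → ℝ}

lemma part2core (hα0 : 0 < α) (hα1 : α < 1)
    (hpXpos : ∀ x, 0 < pX x) (hpYXpos : ∀ x y, 0 < pYX x y) (hqYpos : ∀ y, 0 < qY y)
    [Nonempty X] [Nonempty Y]
    (qt : X × Y → ℝ) (hqtpos : ∀ z, 0 < qt z) (hqt1 : ∑ z : X × Y, qt z = 1) :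
    Freal α pX pYX qY (tQ α pX pYX qY) ≤ Freal α pX pYX qY qt := by
  have h1α : (0:ℝ) < 1 - α := by linarith
  have hQpos := fun z => tQ_pos (α := α) hpYXpos hqYpos hpXpos z
  have hQ1 := tQ_sum (α := α) (pX := pX) hpYXpos hqYpos hpXpos
  have hS := fun x => tS_pos (α := α) hpYXpos hqYpos x
  have hG := fun x y => tG_pos (α := α) hpYXpos hqYpos x y
  have hBpos := fun x => tB_pos (α := α) (pX := pX) hpYXpos hqYpos hpXpos x
  have hm : ∀ x, 0 < ∑ y, qt (x, y) :=
    fun x => Finset.sum_pos (fun y _ => hqtpos (x, y)) Finset.univ_nonempty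
  have hm1 : ∑ x, ∑ y, qt (x, y) = 1 := by rw [← Fintype.sum_prod_type, hqt1]
  have hk1 := keyId hα0 hα1 hpXpos hpYXpos hqYpos (tQ α pX pYX qY) hQpos hQ1
  have hk2 := keyId hα0 hα1 hpXpos hpYXpos hqYpos qt hqtpos hqt1
  have z1 : (∑ z : X × Y, tQ α pX pYX qY z * Real.log (tQ α pX pYX qY z /
      ((∑ y, tQ α pX pYX qY (z.1, y)) * (tG α pYX qY z.1 z.2 / tS α pYX qY z.1)))) = 0 := by
    refine Finset.sum_eq_zero fun z _ => ?_
    rw [tQ_marg hpYXpos hqYpos z.1,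
      show tB α pX pYX qY z.1 * (tG α pYX qY z.1 z.2 / tS α pYX qY z.1)
        = tQ α pX pYX qY z from rfl,
      div_self (hQpos z).ne', Real.log_one, mul_zero]
  have z2 : (∑ x, (∑ y, tQ α pX pYX qY (x, y)) *
      Real.log ((∑ y, tQ α pX pYX qY (x, y)) / tB α pX pYX qY x)) = 0 := by
    refine Finset.sum_eq_zero fun x _ => ?_
    rw [tQ_marg hpYXpos hqYpos x, div_self (hBpos x).ne', Real.log_one, mul_zero]
  have hsum1 : ∑ z : X × Y, (∑ y, qt (z.1, y)) * (tG α pYX qY z.1 z.2 / tS α pYX qY z.1)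
      = 1 := by
    rw [Fintype.sum_prod_type]
    have inner : ∀ x : X, (∑ y, (∑ y₁, qt (x, y₁)) * (tG α pYX qY x y / tS α pYX qY x))
        = ∑ y₁, qt (x, y₁) := fun x => by
      rw [← Finset.mul_sum, ← Finset.sum_div,
        show (∑ y, tG α pYX qY x y) = tS α pYX qY x from rfl,
        div_self (hS x).ne', mul_one]
    exact (Finset.sum_congr rfl fun x _ => inner x).trans hm1
  have n1 : 0 ≤ ∑ z : X × Y, qt z * Real.log (qt z /
      ((∑ y, qt (z.1, y)) * (tG α pYX qY z.1 z.2 / tS α pYX qY z.1))) :=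
    gibbs qt (fun z => (∑ y, qt (z.1, y)) * (tG α pYX qY z.1 z.2 / tS α pYX qY z.1))
      hqtpos (fun z => mul_pos (hm z.1) (div_pos (hG z.1 z.2) (hS z.1)))
      (by rw [hsum1, hqt1])
  have n2 : 0 ≤ ∑ x, (∑ y, qt (x, y)) * Real.log ((∑ y, qt (x, y)) / tB α pX pYX qY x) :=
    gibbs (fun x => ∑ y, qt (x, y)) (tB α pX pYX qY) hm hBpos
      (by rw [tB_sum hpYXpos hqYpos hpXpos, hm1])
  have hle : (1 - α) * Freal α pX pYX qY (tQ α pX pYX qY)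
      ≤ (1 - α) * Freal α pX pYX qY qt := by
    rw [hk1, hk2, z1, z2]
    have := mul_nonneg hα0.le n2
    linarith
  exact le_of_mul_le_mul_left hle h1α

end Main

/-- Alternating-minimization updating formulae for `F_α^{LP}` when `α ∈ (0,1)`:
(1) for fixed strictly positive `q̃_{X,Y}`, the minimizing `q_Y` is the `Y`-marginal of
`q̃_{X,Y}`; (2) for fixed strictly positive `q_Y`, the minimizing strictly positive
`q̃_{X,Y}` is the product `q̄_X q̄_{Y|X}` given by the stated tilted formulae. -/
theorem FLP_min_updates {X Y : Type*} [Fintype X] [Fintype Y] [Nonempty X] [Nonempty Y]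
    (α : ℝ) (hα : 0 < α ∧ α < 1)
    (pX : X → ℝ) (hpX : IsPMF pX) (hpXpos : ∀ x, 0 < pX x)
    (pYX : X → Y → ℝ) (hpYX : ∀ x, IsPMF (pYX x)) (hpYXpos : ∀ x y, 0 < pYX x y) :
    (∀ qt : X × Y → ℝ, IsPMF qt → (∀ z, 0 < qt z) →
      ∀ qY : Y → ℝ, IsPMF qY →
        FLP α pX pYX qt (fun y => ∑ x, qt (x, y)) ≤ FLP α pX pYX qt qY) ∧
    (∀ qY : Y → ℝ, IsPMF qY → (∀ y, 0 < qY y) →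
      ∀ qt : X × Y → ℝ, IsPMF qt → (∀ z, 0 < qt z) →
        FLP α pX pYX
          (fun z : X × Y =>
            (pX z.1 * (∑ y, pYX z.1 y ^ α * qY y ^ (1 - α)) ^ (1 / α) /
              ∑ x', pX x' * (∑ y, pYX x' y ^ α * qY y ^ (1 - α)) ^ (1 / α)) *
            (pYX z.1 z.2 ^ α * qY z.2 ^ (1 - α) /
              ∑ y', pYX z.1 y' ^ α * qY y' ^ (1 - α))) qY ≤
        FLP α pX pYX qt qY) := by
  obtain ⟨hα0, hα1⟩ := hα
  constructor
  · -- Part 1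
    intro qt hqt hqtpos qY hqY
    have hm : ∀ x, 0 < ∑ y, qt (x, y) :=
      fun x => Finset.sum_pos (fun y _ => hqtpos (x, y)) Finset.univ_nonempty
    have hm2 : ∀ y, 0 < ∑ x, qt (x, y) :=
      fun y => Finset.sum_pos (fun x _ => hqtpos (x, y)) Finset.univ_nonempty
    simp only [FLP]
    refine add_le_add (add_le_add le_rfl ?_) le_rfl
    have hcondL : ¬∃ z : X × Y, qt z ≠ 0 ∧ (∑ y, qt (z.1, y)) * (∑ x, qt (x, z.2)) = 0 := by
      push_neg
      intro z _
      exact (mul_pos (hm z.1) (hm2 z.2)).ne'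
    by_cases hz : ∃ z : X × Y, qt z ≠ 0 ∧ (∑ y, qt (z.1, y)) * qY z.2 = 0
    · simp only [klDE, if_pos hz]
      exact le_top
    · have hqYpos : ∀ y, 0 < qY y := by
        intro y
        rcases (hqY.1 y).lt_or_eq with h | h
        · exact h
        · exact absurd ⟨(Classical.arbitrary X, y), (hqtpos _).ne', by rw [← h, mul_zero]⟩ hz
      simp only [klDE, if_neg hz, if_neg hcondL]
      norm_cast
      have hsums : ∑ y, ∑ x, qt (x, y) = 1 := by
        rw [← Fintype.sum_prod_type_right, hqt.2]
      have key : ∑ z : X × Y, qt z * Real.log (qt z / ((∑ y, qt (z.1, y)) * qY z.2))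
               - ∑ z : X × Y, qt z * Real.log (qt z / ((∑ y, qt (z.1, y)) * (∑ x, qt (x, z.2))))
          = ∑ y, (∑ x, qt (x, y)) * Real.log ((∑ x, qt (x, y)) / qY y) := by
        rw [← Finset.sum_sub_distrib, Fintype.sum_prod_type_right]
        refine Finset.sum_congr rfl fun y _ => ?_
        rw [Finset.sum_mul]
        refine Finset.sum_congr rfl fun x _ => ?_
        rw [Real.log_div (hqtpos (x, y)).ne' (mul_pos (hm x) (hqYpos y)).ne',
          Real.log_div (hqtpos (x, y)).ne' (mul_pos (hm x) (hm2 y)).ne',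
          Real.log_mul (hm x).ne' (hqYpos y).ne', Real.log_mul (hm x).ne' (hm2 y).ne',
          Real.log_div (hm2 y).ne' (hqYpos y).ne']
        ring
      have hg := gibbs (fun y => ∑ x, qt (x, y)) qY hm2 hqYpos (by rw [hqY.2, hsums])
      linarith [key, hg]
  · -- Part 2
    intro qY hqY hqYpos qt hqt hqtpos
    rw [show (fun z : X × Y =>
        (pX z.1 * (∑ y, pYX z.1 y ^ α * qY y ^ (1 - α)) ^ (1 / α) /
          ∑ x', pX x' * (∑ y, pYX x' y ^ α * qY y ^ (1 - α)) ^ (1 / α)) *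
        (pYX z.1 z.2 ^ α * qY z.2 ^ (1 - α) /
          ∑ y', pYX z.1 y' ^ α * qY y' ^ (1 - α))) = tQ α pX pYX qY from rfl]
    rw [FLP_eq hqYpos (tQ α pX pYX qY) (fun z => tQ_pos hpYXpos hqYpos hpXpos z),
      FLP_eq hqYpos qt hqtpos]
    exact_mod_cast part2core hα0 hα1 hpXpos hpYXpos hqYpos qt hqtpos hqt.2
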